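/- Every Borel subset of the Baire space [ℕ]^ℕ is Ramsey (the Galvin–Prikry theorem). -/

import Mathlib

namespace GPaux

open Set

/-- The set of infinite sets with stem `s` and tail inside `B`. -/
def seg (s : Finset ℕ) (B : Set ℕ) : Set (Set ℕ) :=
  {C | ↑s ⊆ C ∧ C ⊆ ↑s ∪ B ∧ C.Infinite}

def accepts (P : Set ℕ → Prop) (s : Finset ℕ) (B : Set ℕ) : Prop :=
  ∀ C ∈ seg s B, P C

def rejects (P : Set ℕ → Prop) (s : Finset ℕ) (B : Set ℕ) : Prop :=
  ∀ D ⊆ B, D.Infinite → ¬ accepts P s D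

def Hom (P : Set ℕ → Prop) (s : Finset ℕ) (B : Set ℕ) : Prop :=
  (∀ C ∈ seg s B, P C) ∨ (∀ C ∈ seg s B, ¬ P C)

/-- Completely Ramsey. -/
def CR (P : Set ℕ → Prop) : Prop :=
  ∀ (s : Finset ℕ) (A : Set ℕ), A.Infinite → ∃ B ⊆ A, B.Infinite ∧ Hom P s B

/-- Membership is witnessed by a finite amount of information. -/
def FinOpen (P : Set ℕ → Prop) : Prop :=
  ∀ C : Set ℕ, C.Infinite → P C → ∃ n, ∀ D : Set ℕ, D.Infinite →
    (∀ m < n, (m ∈ D ↔ m ∈ C)) → P D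

lemma seg_mono {B B' : Set ℕ} (h : B ⊆ B') (s : Finset ℕ) : seg s B ⊆ seg s B' :=
  fun _C hC => ⟨hC.1, hC.2.1.trans (union_subset_union_right _ h), hC.2.2⟩

lemma accepts_mono {P s} {B B' : Set ℕ} (h : B ⊆ B') (ha : accepts P s B') :
    accepts P s B := fun C hC => ha C (seg_mono h s hC)

lemma rejects_mono {P s} {B B' : Set ℕ} (h : B ⊆ B') (hr : rejects P s B') :
    rejects P s B := fun D hD => hr D (hD.trans h)

lemma Hom_mono {P s} {B B' : Set ℕ} (h : B ⊆ B') (hh : Hom P s B') : Hom P s B :=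
  hh.elim (fun h1 => Or.inl fun C hC => h1 C (seg_mono h s hC))
          (fun h1 => Or.inr fun C hC => h1 C (seg_mono h s hC))

lemma infinite_inter_Ioi {B : Set ℕ} (hB : B.Infinite) (a : ℕ) :
    (B ∩ Set.Ioi a).Infinite := by
  have : B ∩ Set.Ioi a = B \ Set.Iic a := by
    rw [diff_eq, compl_Iic]
  rw [this]
  exact hB.diff (finite_Iic a)

lemma seg_infinite {s B C} (h : C ∈ seg s B) : C.Infinite := h.2.2

lemma onestep (P : Set ℕ → Prop) (s : Finset ℕ) (A : Set ℕ) (hA : A.Infinite)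
    (hrej : rejects P s A) :
    ∃ B ⊆ A, B.Infinite ∧ ∀ a ∈ B, rejects P (insert a s) (B ∩ Set.Ioi a) := by
  classical
  -- one step of shrinking
  have stepEx : ∀ B : Set ℕ, ∃ B' : Set ℕ, B.Infinite →
      (B' ⊆ B ∩ Set.Ioi (sInf B) ∧ B'.Infinite ∧
        (accepts P (insert (sInf B) s) B' ∨
         rejects P (insert (sInf B) s) (B ∩ Set.Ioi (sInf B)))) := by
    intro B
    by_cases hB : B.Infinite
    · set b := sInf B
      by_cases hr : rejects P (insert b s) (B ∩ Set.Ioi b)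
      · exact ⟨B ∩ Set.Ioi b, fun _ => ⟨Subset.rfl, infinite_inter_Ioi hB b, Or.inr hr⟩⟩
      · unfold rejects at hr
        push_neg at hr
        obtain ⟨D, hD1, hD2, hD3⟩ := hr
        exact ⟨D, fun _ => ⟨hD1, hD2, Or.inl hD3⟩⟩
    · exact ⟨∅, fun h => absurd h hB⟩
  set seq : ℕ → Set ℕ := fun k => Nat.rec A (fun _ p => Classical.choose (stepEx p)) k with hseq
  have hseqS : ∀ k, seq (k + 1) = Classical.choose (stepEx (seq k)) := fun k => rfl
  set a : ℕ → ℕ := fun k => sInf (seq k) with ha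
  -- basic invariants
  have hinf : ∀ k, (seq k).Infinite := by
    intro k
    induction k with
    | zero => exact hA
    | succ k ih =>
      rw [hseqS k]
      exact ((Classical.choose_spec (stepEx (seq k))) ih).2.1
  have hsub : ∀ k, seq (k + 1) ⊆ seq k ∩ Set.Ioi (a k) := by
    intro k
    rw [hseqS k]
    exact ((Classical.choose_spec (stepEx (seq k))) (hinf k)).1
  have hspec : ∀ k, accepts P (insert (a k) s) (seq (k + 1)) ∨
      rejects P (insert (a k) s) (seq k ∩ Set.Ioi (a k)) := by
    intro k
    have := ((Classical.choose_spec (stepEx (seq k))) (hinf k)).2.2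
    rw [← hseqS k] at this
    exact this
  have hmem : ∀ k, a k ∈ seq k := fun k => Nat.sInf_mem (hinf k).nonempty
  have hmono : ∀ {k m}, k ≤ m → seq m ⊆ seq k := by
    intro k m h
    induction m with
    | zero => cases Nat.le_zero.mp h; exact Subset.rfl
    | succ m ih =>
      rcases Nat.lt_or_ge k (m+1) with h' | h'
      · exact ((hsub m).trans inter_subset_left).trans (ih (Nat.lt_succ_iff.mp h'))
      · cases le_antisymm h h'; exact Subset.rfl
  have hamono : StrictMono a := by
    apply strictMono_nat_of_lt_succ
    intro k
    exact (hsub k (hmem (k+1))).2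
  have haA : ∀ k, a k ∈ A := fun k => hmono (Nat.zero_le k) (hmem k)
  -- the set of accepting stages is finite
  have hAccFin : ¬ {k | accepts P (insert (a k) s) (seq (k + 1))}.Infinite := by
    intro hAcc
    set Astar := a '' {k | accepts P (insert (a k) s) (seq (k + 1))} with hAstar
    have hAsub : Astar ⊆ A := by rintro x ⟨k, _, rfl⟩; exact haA k
    have hAinf : Astar.Infinite := hAcc.image (hamono.injective.injOn)
    refine hrej Astar hAsub hAinf ?_
    intro C hC
    obtain ⟨hsC, hCsub, hCinf⟩ := hC
    have hdiff : (C \ ↑s).Infinite := hCinf.diff (s.finite_toSet)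
    set m := sInf (C \ ↑s) with hm
    have hmmem : m ∈ C \ ↑s := Nat.sInf_mem hdiff.nonempty
    have hmA : m ∈ Astar := by
      rcases hCsub hmmem.1 with h | h
      · exact absurd h hmmem.2
      · exact h
    obtain ⟨k0, hk0, hk0e⟩ := hmA
    refine hk0 C ⟨?_, ?_, hCinf⟩
    · rw [Finset.coe_insert]
      exact insert_subset (hk0e ▸ hmmem.1) hsC
    · intro x hx
      rw [Finset.coe_insert]
      by_cases hxs : x ∈ (↑s : Set ℕ)
      · exact Or.inl (Or.inr hxs)
      · have hxd : x ∈ C \ ↑s := ⟨hx, hxs⟩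
        have hxm : m ≤ x := Nat.sInf_le hxd
        have hxA : x ∈ Astar := by
          rcases hCsub hx with h | h
          · exact absurd h hxs
          · exact h
        obtain ⟨k', hk', rfl⟩ := hxA
        rcases eq_or_lt_of_le hxm with h | h
        · exact Or.inl (Or.inl (hk0e ▸ h.symm))
        · have : k0 < k' := by
            have := hk0e ▸ h
            exact hamono.lt_iff_lt.mp this
          exact Or.inr (hmono this (hmem k'))
  -- extract a bound
  rw [not_infinite] at hAccFin
  obtain ⟨K, hK⟩ := hAccFin.bddAbove
  set B := a '' Set.Ioi K with hB
  refine ⟨B, ?_, ?_, ?_⟩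
  · rintro x ⟨k, _, rfl⟩; exact haA k
  · exact (Set.Ioi_infinite K).image hamono.injective.injOn
  · rintro x ⟨k, hk, rfl⟩
    have hknacc : ¬ accepts P (insert (a k) s) (seq (k + 1)) := by
      intro hacc
      exact absurd (hK hacc) (not_le.mpr hk)
    have hrk : rejects P (insert (a k) s) (seq k ∩ Set.Ioi (a k)) :=
      (hspec k).resolve_left hknacc
    refine rejects_mono ?_ hrk
    rintro y ⟨⟨k', hk', rfl⟩, hy⟩
    have hkk' : k < k' := hamono.lt_iff_lt.mp hy
    exact hsub k (hmono hkk' (hmem k'))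



lemma shrink_rej (P : Set ℕ → Prop) :
    ∀ (l : List (Finset ℕ)) (B : Set ℕ), B.Infinite → (∀ t ∈ l, rejects P t B) →
      ∃ C ⊆ B, C.Infinite ∧ ∀ t ∈ l, ∀ a ∈ C, rejects P (insert a t) (C ∩ Set.Ioi a) := by
  intro l
  induction l with
  | nil => exact fun B hB _ => ⟨B, Subset.rfl, hB, by simp⟩
  | cons t l ih =>
    intro B hB h
    obtain ⟨C, hCB, hCinf, hC⟩ := ih B hB (fun t' ht' => h t' (List.mem_cons_of_mem _ ht'))
    obtain ⟨C', hC'C, hC'inf, hC'⟩ :=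
      onestep P t C hCinf (rejects_mono hCB (h t List.mem_cons_self))
    refine ⟨C', hC'C.trans hCB, hC'inf, ?_⟩
    intro t' ht' a ha
    rcases List.mem_cons.mp ht' with rfl | ht'
    · exact hC' a ha
    · exact rejects_mono (inter_subset_inter_left _ hC'C) (hC t' ht' a (hC'C ha))

lemma fusion_rej (P : Set ℕ → Prop) (s : Finset ℕ) (A : Set ℕ) (hA : A.Infinite)
    (hrej : rejects P s A) :
    ∃ B ⊆ A, B.Infinite ∧ ∀ F : Finset ℕ, ↑F ⊆ B → rejects P (s ∪ F) B := by
  classical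
  have stepEx : ∀ q : Finset ℕ × Set ℕ, ∃ q' : Finset ℕ × Set ℕ,
      (q.2.Infinite ∧ (∀ F ⊆ q.1, rejects P (s ∪ F) q.2)) →
      (∃ b ∈ q.2, q'.1 = insert b q.1 ∧ q'.2 ⊆ q.2 ∧ (∀ y ∈ q'.2, b < y) ∧
        q'.2.Infinite ∧ (∀ F ⊆ q'.1, rejects P (s ∪ F) q'.2)) := by
    intro q
    by_cases hq : q.2.Infinite ∧ (∀ F ⊆ q.1, rejects P (s ∪ F) q.2)
    · obtain ⟨hqi, hqr⟩ := hq
      set l := (q.1.powerset.image (fun F => s ∪ F)).toList with hl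
      have hrl : ∀ t ∈ l, rejects P t q.2 := by
        intro t ht
        rw [hl, Finset.mem_toList, Finset.mem_image] at ht
        obtain ⟨F, hF, rfl⟩ := ht
        exact hqr F (Finset.mem_powerset.mp hF)
      obtain ⟨C, hCq, hCinf, hC⟩ := shrink_rej P l q.2 hqi hrl
      set b := sInf C with hb
      have hbC : b ∈ C := Nat.sInf_mem hCinf.nonempty
      refine ⟨(insert b q.1, C ∩ Set.Ioi b), fun _ => ⟨b, hCq hbC, rfl, ?_, ?_, ?_, ?_⟩⟩
      · exact inter_subset_left.trans hCq
      · exact fun y hy => hy.2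
      · exact infinite_inter_Ioi hCinf b
      · intro F hF
        by_cases hbF : b ∈ F
        · have hF' : F.erase b ⊆ q.1 := fun x hx =>
            (Finset.mem_insert.mp (hF (Finset.mem_of_mem_erase hx))).resolve_left
              (Finset.ne_of_mem_erase hx)
          have ht : s ∪ F.erase b ∈ l := by
            rw [hl, Finset.mem_toList, Finset.mem_image]
            exact ⟨F.erase b, Finset.mem_powerset.mpr hF', rfl⟩
          have h2 := hC _ ht b hbC
          have heq : insert b (s ∪ F.erase b) = s ∪ F := by
            rw [← Finset.union_insert, Finset.insert_erase hbF]
          rwa [heq] at h2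
        · have hFq : F ⊆ q.1 := fun x hx =>
            (Finset.mem_insert.mp (hF hx)).resolve_left (fun h => hbF (h ▸ hx))
          exact rejects_mono (inter_subset_left.trans hCq) (hqr F hFq)
    · exact ⟨q, fun h => absurd h hq⟩
  set st : ℕ → Finset ℕ × Set ℕ :=
    fun k => Nat.rec (∅, A) (fun _ q => Classical.choose (stepEx q)) k with hst
  have hstS : ∀ k, st (k + 1) = Classical.choose (stepEx (st k)) := fun k => rfl
  -- the invariant
  have hInv : ∀ k, (st k).2.Infinite ∧ (st k).2 ⊆ A ∧ ↑(st k).1 ⊆ A ∧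
      (∀ x ∈ (st k).1, ∀ y ∈ (st k).2, x < y) ∧
      (∀ F ⊆ (st k).1, rejects P (s ∪ F) (st k).2) := by
    intro k
    induction k with
    | zero =>
      have h0 : st 0 = (∅, A) := rfl
      rw [h0]
      refine ⟨hA, Subset.rfl, by simp, by simp, ?_⟩
      intro F hF
      rw [Finset.subset_empty.mp hF, Finset.union_empty]
      exact hrej
    | succ k ih =>
      obtain ⟨h1, h2, h3, h4, h5⟩ := ih
      obtain ⟨b, hb, he1, he2, he3, he4, he5⟩ :=
        Classical.choose_spec (stepEx (st k)) ⟨h1, h5⟩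
      rw [← hstS k] at he1 he2 he3 he4 he5
      refine ⟨he4, he2.trans h2, ?_, ?_, he5⟩
      · rw [he1, Finset.coe_insert]
        exact insert_subset (h2 hb) h3
      · intro x hx y hy
        rw [he1, Finset.mem_insert] at hx
        rcases hx with rfl | hx
        · exact he3 y hy
        · exact h4 x hx y (he2 hy)
  have hstep : ∀ k, ∃ b ∈ (st k).2, (st (k+1)).1 = insert b (st k).1 ∧
      (st (k+1)).2 ⊆ (st k).2 := by
    intro k
    obtain ⟨b, hb, he1, he2, _⟩ :=
      Classical.choose_spec (stepEx (st k)) ⟨(hInv k).1, (hInv k).2.2.2.2⟩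
    rw [← hstS k] at he1 he2
    exact ⟨b, hb, he1, he2⟩
  -- monotonicity across stages
  have hKey : ∀ k m, k ≤ m → (st k).1 ⊆ (st m).1 ∧ (st m).2 ⊆ (st k).2 ∧
      ↑(st m).1 ⊆ ↑(st k).1 ∪ (st k).2 := by
    intro k m h
    induction m with
    | zero =>
      cases Nat.le_zero.mp h
      exact ⟨Finset.Subset.refl _, Subset.rfl, subset_union_left⟩
    | succ m ih =>
      rcases Nat.lt_or_ge k (m+1) with h' | h'
      · obtain ⟨ih1, ih2, ih3⟩ := ih (Nat.lt_succ_iff.mp h')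
        obtain ⟨b, hb, he1, he2⟩ := hstep m
        refine ⟨ih1.trans ?_, he2.trans ih2, ?_⟩
        · rw [he1]; exact Finset.subset_insert _ _
        · rw [he1, Finset.coe_insert]
          exact insert_subset (Or.inr (ih2 hb)) ih3
      · cases le_antisymm h h'
        exact ⟨Finset.Subset.refl _, Subset.rfl, subset_union_left⟩
  have hcard : ∀ k, (st k).1.card = k := by
    intro k
    induction k with
    | zero => rfl
    | succ k ih =>
      obtain ⟨b, hb, he1, _⟩ := hstep k
      have hbn : b ∉ (st k).1 := fun hbp =>
        lt_irrefl b ((hInv k).2.2.2.1 b hbp b hb)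
      rw [he1, Finset.card_insert_of_notMem hbn, ih]
  set Bf : Set ℕ := ⋃ k, ↑(st k).1 with hBfdef
  have hBfA : Bf ⊆ A := by
    rintro x hx
    obtain ⟨k, hk⟩ := mem_iUnion.mp hx
    exact (hInv k).2.2.1 hk
  have hBfInf : Bf.Infinite := by
    intro hf
    have hsub : (st (hf.toFinset.card + 1)).1 ⊆ hf.toFinset := by
      intro x hx
      rw [Set.Finite.mem_toFinset]
      exact mem_iUnion.mpr ⟨hf.toFinset.card + 1, Finset.mem_coe.mpr hx⟩
    have h1 := Finset.card_le_card hsub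
    have h2 := hcard (hf.toFinset.card + 1)
    omega
  refine ⟨Bf, hBfA, hBfInf, ?_⟩
  intro F hF
  -- find a stage containing F
  have hFk : ∃ k, F ⊆ (st k).1 := by
    classical
    induction F using Finset.induction_on with
    | empty => exact ⟨0, Finset.empty_subset _⟩
    | @insert a F ha ih =>
      have haBf : a ∈ Bf := hF (by simp)
      obtain ⟨k1, hk1⟩ := mem_iUnion.mp haBf
      obtain ⟨k2, hk2⟩ := ih (fun x hx => hF (by simp [hx]))
      refine ⟨max k1 k2, Finset.insert_subset ?_ ?_⟩
      · exact (hKey k1 _ (le_max_left _ _)).1 hk1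
      · exact hk2.trans (hKey k2 _ (le_max_right _ _)).1
  obtain ⟨k, hk⟩ := hFk
  intro D hD hDinf hacc
  have hD' : (D \ ↑(st k).1).Infinite := hDinf.diff (Finset.finite_toSet _)
  have hD'sub : D \ ↑(st k).1 ⊆ (st k).2 := by
    rintro x ⟨hx1, hx2⟩
    obtain ⟨m, hm⟩ := mem_iUnion.mp (hD hx1)
    rcases le_total m k with h | h
    · exact absurd ((hKey m k h).1 hm) hx2
    · rcases (hKey k m h).2.2 hm with h' | h'
      · exact absurd h' hx2
      · exact h'
  exact (hInv k).2.2.2.2 F hk (D \ ↑(st k).1) hD'sub hD'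
    (accepts_mono diff_subset hacc)


lemma finOpen_CR (P : Set ℕ → Prop) (hP : FinOpen P) : CR P := by
  intro s A hA
  by_cases hr : rejects P s A
  · obtain ⟨B, hBA, hBinf, hBrej⟩ := fusion_rej P s A hA hr
    refine ⟨B, hBA, hBinf, Or.inr ?_⟩
    intro C hC hPC
    obtain ⟨hsC, hCsub, hCinf⟩ := hC
    obtain ⟨n0, hn0⟩ := hP C hCinf hPC
    set n := n0 + (s.sup id) + 1 with hn
    have hsn : ∀ x ∈ s, x < n := by
      intro x hx
      have := Finset.le_sup (f := id) hx
      simp only [id_eq] at this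
      omega
    have htfin : (C ∩ Set.Iio n).Finite := (finite_Iio n).subset inter_subset_right
    set tF := htfin.toFinset with htF
    have htFc : (↑tF : Set ℕ) = C ∩ Set.Iio n := htfin.coe_toFinset
    have hstF : s ⊆ tF := by
      intro x hx
      rw [← Finset.mem_coe, htFc]
      exact ⟨hsC hx, hsn x hx⟩
    have hFB : ↑(tF \ s) ⊆ B := by
      intro x hx
      rw [Finset.coe_sdiff] at hx
      obtain ⟨hx1, hx2⟩ := hx
      rw [htFc] at hx1
      rcases hCsub hx1.1 with h | h
      · exact absurd h hx2
      · exact h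
    have hrejtF : rejects P tF B := by
      have := hBrej (tF \ s) hFB
      rwa [Finset.union_sdiff_of_subset hstF] at this
    refine hrejtF (B \ Set.Iio n) diff_subset (hBinf.diff (finite_Iio n)) ?_
    intro D hD
    obtain ⟨htD, hDsub, hDinf⟩ := hD
    refine hn0 D hDinf ?_
    intro m hm
    have hmn : m < n := by omega
    constructor
    · intro hmD
      rcases hDsub hmD with h | h
      · rw [htFc] at h; exact h.1
      · exact absurd hmn (by simpa using h.2)
    · intro hmC
      apply htD
      rw [htFc]
      exact ⟨hmC, hmn⟩
  · unfold rejects at hr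
    push_neg at hr
    obtain ⟨B, hBA, hBinf, hBacc⟩ := hr
    exact ⟨B, hBA, hBinf, Or.inl hBacc⟩


lemma shrink_hom (P : ℕ → Set ℕ → Prop) (hP : ∀ n, CR (P n)) :
    ∀ (l : List (Finset ℕ × ℕ)) (B : Set ℕ), B.Infinite →
      ∃ C ⊆ B, C.Infinite ∧ ∀ p ∈ l, Hom (P p.2) p.1 C := by
  intro l
  induction l with
  | nil => exact fun B hB => ⟨B, Subset.rfl, hB, by simp⟩
  | cons p l ih =>
    intro B hB
    obtain ⟨C, hCB, hCinf, hC⟩ := ih B hB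
    obtain ⟨C', hC'C, hC'inf, hC'⟩ := hP p.2 p.1 C hCinf
    refine ⟨C', hC'C.trans hCB, hC'inf, ?_⟩
    intro p' hp'
    rcases List.mem_cons.mp hp' with rfl | hp'
    · exact hC'
    · exact Hom_mono hC'C (hC p' hp')

lemma union_CR (P : ℕ → Set ℕ → Prop) (hP : ∀ n, CR (P n)) :
    CR (fun A => ∃ n, P n A) := by
  classical
  intro s A hA
  -- fusion construction
  have stepEx : ∀ (k : ℕ) (q : Finset ℕ × Set ℕ), ∃ q' : Finset ℕ × Set ℕ,
      q.2.Infinite →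
      (q'.1 = insert (sInf q.2) q.1 ∧ q'.2 ⊆ q.2 ∩ Set.Ioi (sInf q.2) ∧ q'.2.Infinite ∧
        ∀ F ⊆ q'.1, ∀ n ≤ k + 1, Hom (P n) (s ∪ F) q'.2) := by
    intro k q
    by_cases hq : q.2.Infinite
    · set b := sInf q.2 with hb
      set l := (((insert b q.1).powerset ×ˢ Finset.range (k+2)).toList).map
        (fun p => (s ∪ p.1, p.2)) with hl
      obtain ⟨C, hCq, hCinf, hC⟩ :=
        shrink_hom P hP l (q.2 ∩ Set.Ioi b) (infinite_inter_Ioi hq b)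
      refine ⟨(insert b q.1, C), fun _ => ⟨rfl, hCq, hCinf, ?_⟩⟩
      intro F hF n hn
      have hmem : (s ∪ F, n) ∈ l := by
        rw [hl, List.mem_map]
        refine ⟨(F, n), ?_, rfl⟩
        rw [Finset.mem_toList, Finset.mem_product]
        exact ⟨Finset.mem_powerset.mpr hF, Finset.mem_range.mpr (by omega)⟩
      exact hC (s ∪ F, n) hmem
    · exact ⟨q, fun h => absurd h hq⟩
  -- initial stage
  obtain ⟨B0, hB0A, hB0inf, hB0⟩ := hP 0 (s ∪ ∅) A hA
  set st : ℕ → Finset ℕ × Set ℕ :=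
    fun k => Nat.rec (∅, B0) (fun k q => Classical.choose (stepEx k q)) k with hst
  have hstS : ∀ k, st (k + 1) = Classical.choose (stepEx k (st k)) := fun k => rfl
  set b : ℕ → ℕ := fun k => sInf (st k).2 with hbdef
  -- invariant
  have hInv : ∀ k, (st k).2.Infinite ∧ (st k).2 ⊆ A ∧
      (∀ F ⊆ (st k).1, ∀ n ≤ k, Hom (P n) (s ∪ F) (st k).2) := by
    intro k
    induction k with
    | zero =>
      have h0 : st 0 = (∅, B0) := rfl
      rw [h0]
      refine ⟨hB0inf, hB0A, ?_⟩
      intro F hF n hn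
      rw [Finset.subset_empty.mp hF]
      cases Nat.le_zero.mp hn
      exact hB0
    | succ k ih =>
      obtain ⟨h1, h2, h3⟩ := ih
      obtain ⟨he1, he2, he3, he4⟩ := Classical.choose_spec (stepEx k (st k)) h1
      rw [← hstS k] at he1 he2 he3 he4
      exact ⟨he3, (he2.trans inter_subset_left).trans h2, he4⟩
  have hstep : ∀ k, (st (k+1)).1 = insert (b k) (st k).1 ∧
      (st (k+1)).2 ⊆ (st k).2 ∩ Set.Ioi (b k) := by
    intro k
    obtain ⟨he1, he2, _⟩ := Classical.choose_spec (stepEx k (st k)) (hInv k).1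
    rw [← hstS k] at he1 he2
    exact ⟨he1, he2⟩
  have hbmem : ∀ k, b k ∈ (st k).2 := fun k => Nat.sInf_mem (hInv k).1.nonempty
  have hBmono : ∀ {k m}, k ≤ m → (st m).2 ⊆ (st k).2 := by
    intro k m h
    induction m with
    | zero => cases Nat.le_zero.mp h; exact Subset.rfl
    | succ m ih =>
      rcases Nat.lt_or_ge k (m+1) with h' | h'
      · exact ((hstep m).2.trans inter_subset_left).trans (ih (Nat.lt_succ_iff.mp h'))
      · cases le_antisymm h h'; exact Subset.rfl
  have hbmono : StrictMono b := by
    apply strictMono_nat_of_lt_succ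
    intro k
    exact ((hstep k).2 (hbmem (k+1))).2
  have hpicked : ∀ k, (st k).1 = (Finset.range k).image b := by
    intro k
    induction k with
    | zero => rfl
    | succ k ih =>
      rw [(hstep k).1, ih, Finset.range_add_one, Finset.image_insert]
  set Bf : Set ℕ := Set.range b with hBfdef
  have hBfinf : Bf.Infinite := infinite_range_of_injective hbmono.injective
  have hBfA : Bf ⊆ A := by
    rintro x ⟨k, rfl⟩
    exact (hInv k).2.1 (hbmem k)
  have hBftail : ∀ k, Bf ∩ Set.Ici (b k) ⊆ (st k).2 := by
    rintro k x ⟨⟨m, rfl⟩, hx⟩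
    exact hBmono (hbmono.le_iff_le.mp hx) (hbmem m)
  have hBfhead : ∀ k, ∀ x ∈ Bf, x < b k → x ∈ (st k).1 := by
    rintro k x ⟨m, rfl⟩ hx
    rw [hpicked]
    exact Finset.mem_image.mpr ⟨m, Finset.mem_range.mpr (hbmono.lt_iff_lt.mp hx), rfl⟩
  -- the auxiliary finitely-determined family
  set O : Set ℕ → Prop := fun C => ∃ n, ∃ F : Finset ℕ, F ⊆ (st n).1 ∧
      (∀ m < b n, (m ∈ C ↔ m ∈ ↑s ∪ ↑F)) ∧
      (∀ D ∈ seg (s ∪ F) (Bf ∩ Set.Ici (b n)), P n D) with hO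
  have hOfin : FinOpen O := by
    rintro C _ ⟨n, F, hF1, hF2, hF3⟩
    refine ⟨b n, fun D _ hagree => ⟨n, F, hF1, ?_, hF3⟩⟩
    intro m hm
    rw [hagree m hm]
    exact hF2 m hm
  obtain ⟨B', hB'Bf, hB'inf, hB'hom⟩ := finOpen_CR O hOfin s Bf hBfinf
  refine ⟨B', hB'Bf.trans hBfA, hB'inf, ?_⟩
  rcases hB'hom with hpos | hneg
  · left
    intro C hC
    obtain ⟨hsC, hCsub, hCinf⟩ := hC
    obtain ⟨n, F, hF1, hF2, hF3⟩ := hpos C ⟨hsC, hCsub, hCinf⟩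
    refine ⟨n, hF3 C ⟨?_, ?_, hCinf⟩⟩
    · rw [Finset.coe_union]
      refine union_subset hsC ?_
      intro x hx
      rw [Finset.mem_coe] at hx
      have hxlt : x < b n := by
        have := hF1 hx
        rw [hpicked] at this
        obtain ⟨i, hi, rfl⟩ := Finset.mem_image.mp this
        exact hbmono (Finset.mem_range.mp hi)
      exact (hF2 x hxlt).mpr (Finset.mem_union.mpr (Or.inr hx))
    · intro x hx
      rcases hCsub hx with h | h
      · exact Or.inl (by rw [Finset.coe_union]; exact Or.inl h)
      · rcases Nat.lt_or_ge x (b n) with h' | h'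
        · exact Or.inl (Finset.mem_coe.mpr ((hF2 x h').mp hx))
        · exact Or.inr ⟨hB'Bf h, h'⟩
  · right
    rintro C hC ⟨n, hPn⟩
    obtain ⟨hsC, hCsub, hCinf⟩ := hC
    set F := (st n).1.filter (fun x => x ∈ C) with hF
    have hF1 : F ⊆ (st n).1 := Finset.filter_subset _ _
    have hFC : (↑F : Set ℕ) ⊆ C := by
      intro x hx
      rw [Finset.mem_coe, hF, Finset.mem_filter] at hx
      exact hx.2
    have hiff : ∀ m < b n, (m ∈ C ↔ m ∈ ↑s ∪ ↑F) := by
      intro m hm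
      constructor
      · intro hmC
        rcases hCsub hmC with h | h
        · exact Finset.mem_union.mpr (Or.inl (Finset.mem_coe.mp h))
        · refine Finset.mem_union.mpr (Or.inr ?_)
          rw [hF, Finset.mem_filter]
          exact ⟨hBfhead n m (hB'Bf h) hm, hmC⟩
      · intro h
        rcases Finset.mem_union.mp h with h | h
        · exact hsC (Finset.mem_coe.mpr h)
        · exact hFC (Finset.mem_coe.mpr h)
    have hCseg : C ∈ seg (s ∪ F) (st n).2 := by
      refine ⟨?_, ?_, hCinf⟩
      · rw [Finset.coe_union]
        exact union_subset hsC hFC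
      · intro x hx
        rcases hCsub hx with h | h
        · exact Or.inl (by rw [Finset.coe_union]; exact Or.inl h)
        · rcases Nat.lt_or_ge x (b n) with h' | h'
          · refine Or.inl ?_
            rw [Finset.coe_union]
            refine Or.inr ?_
            rw [Finset.mem_coe, Finset.mem_filter]
            exact ⟨hBfhead n x (hB'Bf h) h', hx⟩
          · exact Or.inr (hBftail n ⟨hB'Bf h, h'⟩)
    have hhom := (hInv n).2.2 F hF1 n le_rfl
    rcases hhom with hall | hnone
    · exact hneg C ⟨hsC, hCsub, hCinf⟩
        ⟨n, F, hF1, hiff, fun D hD => hall D (seg_mono (hBftail n) _ hD)⟩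
    · exact hnone C hCseg hPn


lemma CR_congr {Q Q' : Set ℕ → Prop} (h : ∀ A : Set ℕ, A.Infinite → (Q A ↔ Q' A))
    (hQ : CR Q) : CR Q' := by
  intro s A hA
  obtain ⟨B, hBA, hBinf, hhom⟩ := hQ s A hA
  refine ⟨B, hBA, hBinf, ?_⟩
  rcases hhom with h1 | h1
  · exact Or.inl fun C hC => (h C hC.2.2).mp (h1 C hC)
  · exact Or.inr fun C hC hQ' => h1 C hC ((h C hC.2.2).mpr hQ')

lemma CR_not {Q : Set ℕ → Prop} (hQ : CR Q) : CR (fun A => ¬ Q A) := by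
  intro s A hA
  obtain ⟨B, hBA, hBinf, hhom⟩ := hQ s A hA
  exact ⟨B, hBA, hBinf, hhom.elim (fun h => Or.inr fun C hC hn => hn (h C hC)) Or.inl⟩

lemma CR_false : CR (fun _ => False) :=
  fun _s A hA => ⟨A, Subset.rfl, hA, Or.inr (fun _ _ h => h)⟩

end GPaux


/-- The space `[ℕ]^ℕ` of infinite subsets of `ℕ`. -/
def BaireInf : Type := {A : Set ℕ // A.Infinite}

/-- The metric (product) topology on `[ℕ]^ℕ`, induced from the product topology on `ℕ → Bool`
via characteristic functions. -/
noncomputable instance : TopologicalSpace BaireInf :=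
  TopologicalSpace.induced
    (fun A (n : ℕ) => @decide (n ∈ A.val) (Classical.dec _)) inferInstance

open GPaux in
lemma gp_open (U : Set BaireInf) (hU : IsOpen U) :
    CR (fun A => ∃ h : A.Infinite, (⟨A, h⟩ : BaireInf) ∈ U) := by
  apply finOpen_CR
  rintro C hCinf ⟨hC, hmem⟩
  obtain ⟨V, hV, hVU⟩ := isOpen_induced_iff.mp hU
  rw [← hVU] at hmem
  replace hmem : (fun n : ℕ => @decide (n ∈ C) (Classical.dec _)) ∈ V := hmem
  obtain ⟨I, u, hu, hIu⟩ := isOpen_pi_iff.mp hV _ hmem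
  refine ⟨(I.sup id) + 1, ?_⟩
  intro D hD hagree
  refine ⟨hD, ?_⟩
  rw [← hVU]
  show (fun n : ℕ => @decide (n ∈ D) (Classical.dec _)) ∈ V
  apply hIu
  intro i hi
  have hilt : i < (I.sup id) + 1 := by
    have := Finset.le_sup (f := id) hi
    simp only [id_eq] at this
    omega
  have heq : (@decide (i ∈ D) (Classical.dec _)) = (@decide (i ∈ C) (Classical.dec _)) :=
    decide_eq_decide.mpr (hagree i hilt)
  show (fun n : ℕ => @decide (n ∈ D) (Classical.dec _)) i ∈ u i
  simp only []
  rw [heq]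
  exact (hu i hi).2

open GPaux in
noncomputable def CRmeas : MeasurableSpace BaireInf where
  MeasurableSet' := fun X => CR (fun A => ∃ h : A.Infinite, (⟨A, h⟩ : BaireInf) ∈ X)
  measurableSet_empty := CR_congr (by simp; exact fun A _ h => h) CR_false
  measurableSet_compl := by
    intro X hX
    refine CR_congr ?_ (CR_not hX)
    intro A hA
    constructor
    · intro hn
      exact ⟨hA, fun hm => hn ⟨hA, hm⟩⟩
    · rintro ⟨h, hm⟩ ⟨h', hm'⟩
      exact hm hm'
  measurableSet_iUnion := by
    intro f hf
    refine CR_congr ?_ (union_CR (fun n A => ∃ h : A.Infinite, (⟨A, h⟩ : BaireInf) ∈ f n) hf)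
    intro A hA
    constructor
    · rintro ⟨n, h, hm⟩
      exact ⟨hA, Set.mem_iUnion.mpr ⟨n, hm⟩⟩
    · rintro ⟨h, hm⟩
      obtain ⟨n, hn⟩ := Set.mem_iUnion.mp hm
      exact ⟨n, hA, hn⟩

/-- The Galvin–Prikry theorem: every Borel subset of the Baire space `[ℕ]^ℕ` is Ramsey. -/
theorem galvin_prikry (X : Set BaireInf) (hX : @MeasurableSet BaireInf (borel BaireInf) X) :
    ∀ M : Set ℕ, M.Infinite → ∃ N ⊆ M, N.Infinite ∧
      ((∀ (A : Set ℕ) (hA : A.Infinite), A ⊆ N → (⟨A, hA⟩ : BaireInf) ∈ X) ∨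
       (∀ (A : Set ℕ) (hA : A.Infinite), A ⊆ N → (⟨A, hA⟩ : BaireInf) ∉ X)) := by
  intro M hM
  have hle : borel BaireInf ≤ CRmeas := by
    rw [borel]
    exact MeasurableSpace.generateFrom_le (fun U hU => gp_open U hU)
  have hCR : GPaux.CR (fun A => ∃ h : A.Infinite, (⟨A, h⟩ : BaireInf) ∈ X) := hle X hX
  obtain ⟨N, hNM, hNinf, hhom⟩ := hCR ∅ M hM
  refine ⟨N, hNM, hNinf, ?_⟩
  have hseg : ∀ (A : Set ℕ), A.Infinite → A ⊆ N → A ∈ GPaux.seg ∅ N := by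
    intro A hA hAN
    refine ⟨by simp, ?_, hA⟩
    rw [Finset.coe_empty, Set.empty_union]
    exact hAN
  rcases hhom with h | h
  · left
    intro A hA hAN
    obtain ⟨h', hm⟩ := h A (hseg A hA hAN)
    exact hm
  · right
    intro A hA hAN hm
    exact h A (hseg A hA hAN) ⟨hA, hm⟩
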